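/- Combining the FCT estimator with clipping: let θ ∈ ℝ^q, let θ̂ and w be as in the DREM estimator (θ̂' = γΔ(𝒴 − Δθ̂) with 𝒴 = Δθ, w' = −γΔ²w, w(0)=1), suppose Δ is continuous with Δ(t) ≥ ε > 0 for t > 0, and define the clipped signal w_c(t) = min(w(t), 1−μ) for μ ∈ (0,1). Then there exists t_c > 0 such that for all t > t_c, (1/(1 − w_c(t)))·(θ̂(t) − w_c(t)·θ̂(0)) = θ. -/

import Mathlib

/-- FCT estimator with clipping: with the DREM estimator `θ̂' = γΔ(𝒴 − Δθ̂)`,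
`𝒴 = Δθ`, `w' = −γΔ²w`, `w(0) = 1`, `Δ` continuous with `Δ(t) ≥ ε > 0` for `t > 0`,
and clipped signal `w_c(t) = min(w(t), 1−μ)`, there exists `t_c > 0` such that for all
`t > t_c`, `(1/(1 − w_c(t)))·(θ̂(t) − w_c(t)·θ̂(0)) = θ`. -/
theorem stmt6 {q : ℕ} (θ : Fin q → ℝ) (γ ε μ : ℝ)
    (hγ : 0 < γ) (hε : 0 < ε) (hμ : μ ∈ Set.Ioo (0:ℝ) 1)
    (Δ : ℝ → ℝ) (hΔ : Continuous Δ) (hΔε : ∀ t : ℝ, 0 < t → ε ≤ Δ t)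
    (θh : ℝ → (Fin q → ℝ)) (w : ℝ → ℝ)
    (hθh : ∀ t : ℝ, 0 ≤ t →
      HasDerivAt θh ((γ * Δ t) • (Δ t • θ - Δ t • θh t)) t)
    (hw : ∀ t : ℝ, 0 ≤ t → HasDerivAt w (-γ * (Δ t) ^ 2 * w t) t)
    (hw0 : w 0 = 1) :
    ∃ tc : ℝ, 0 < tc ∧ ∀ t : ℝ, tc < t →
      (1 - min (w t) (1 - μ))⁻¹ • (θh t - min (w t) (1 - μ) • θh 0) = θ := by
  obtain ⟨hμ0, hμ1⟩ := hμ
  have hΔ0 : ε ≤ Δ 0 := by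
    have h1 : Filter.Tendsto Δ (nhdsWithin 0 (Set.Ioi 0)) (nhds (Δ 0)) :=
      (hΔ.continuousAt.tendsto).mono_left nhdsWithin_le_nhds
    exact ge_of_tendsto h1 (by
      filter_upwards [self_mem_nhdsWithin] with x hx using hΔε x hx)
  have hΔall : ∀ s : ℝ, 0 ≤ s → ε ≤ Δ s := fun s hs => by
    rcases eq_or_lt_of_le hs with h | h
    · simpa [← h] using hΔ0
    · exact hΔε s h
  set A : ℝ → ℝ := fun t => ∫ s in (0:ℝ)..t, γ * Δ s ^ 2 with hAdef
  have hΔ2 : Continuous fun s => γ * Δ s ^ 2 := by continuity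
  have hA : ∀ t : ℝ, HasDerivAt A (γ * Δ t ^ 2) t := fun t =>
    (hΔ2.integral_hasStrictDerivAt 0 t).hasDerivAt
  have hA0 : A 0 = 0 := by simp [hAdef]
  have hE : ∀ t : ℝ, HasDerivAt (fun t => Real.exp (A t))
      ((γ * Δ t ^ 2) * Real.exp (A t)) t := fun t => by
    simpa [mul_comm] using (hA t).exp
  have hAcont : Continuous A := continuous_iff_continuousAt.2 fun t => (hA t).continuousAt
  have hEcont : Continuous fun t => Real.exp (A t) := Real.continuous_exp.comp hAcont
  -- w t = exp (-(A t)) for t ≥ 0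
  have hwval : ∀ t : ℝ, 0 ≤ t → w t = Real.exp (-(A t)) := by
    intro t ht
    have hcont : ContinuousOn (fun s => Real.exp (A s) * w s) (Set.Icc 0 t) := by
      intro x hx
      exact ((hEcont.continuousAt).mul (hw x hx.1).continuousAt).continuousWithinAt
    have hderiv : ∀ x ∈ Set.Ico 0 t,
        HasDerivWithinAt (fun s => Real.exp (A s) * w s) 0 (Set.Ici x) x := by
      intro x hx
      have := (hE x).mul (hw x hx.1)
      have h0 : (γ * Δ x ^ 2) * Real.exp (A x) * w x +
          Real.exp (A x) * (-γ * Δ x ^ 2 * w x) = 0 := by ring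
      exact (h0 ▸ this).hasDerivWithinAt
    have := constant_of_has_deriv_right_zero hcont hderiv t (Set.mem_Icc.2 ⟨ht, le_refl t⟩)
    simp only [hA0, Real.exp_zero, one_mul, hw0, mul_one] at this
    have hEne : Real.exp (A t) ≠ 0 := Real.exp_ne_zero _
    rw [Real.exp_neg]; field_simp
    linarith [this]
  -- θh t = θ + exp (-(A t)) • (θh 0 - θ)
  have hθval : ∀ t : ℝ, 0 ≤ t → θh t - θ = Real.exp (-(A t)) • (θh 0 - θ) := by
    intro t ht
    have hcont : ContinuousOn (fun s => Real.exp (A s) • (θh s - θ)) (Set.Icc 0 t) := by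
      intro x hx
      exact ((hEcont.continuousAt).smul
        (((hθh x hx.1).continuousAt).sub continuousAt_const)).continuousWithinAt
    have hderiv : ∀ x ∈ Set.Ico 0 t,
        HasDerivWithinAt (fun s => Real.exp (A s) • (θh s - θ)) 0 (Set.Ici x) x := by
      intro x hx
      have h1 := (hE x).smul ((hθh x hx.1).sub_const θ)
      have heq : (Δ x • θ - Δ x • θh x) = (-(Δ x)) • (θh x - θ) := by
        simp [smul_sub, neg_smul]; abel
      rw [heq] at h1
      have h0 : Real.exp (A x) • (γ * Δ x) • (-(Δ x)) • (θh x - θ) +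
          ((γ * Δ x ^ 2) * Real.exp (A x)) • (θh x - θ) = 0 := by
        rw [smul_smul, smul_smul, ← add_smul]
        have : Real.exp (A x) * (γ * Δ x) * -Δ x + γ * Δ x ^ 2 * Real.exp (A x) = 0 := by
          ring
        rw [this, zero_smul]
      rw [h0] at h1
      exact h1.hasDerivWithinAt
    have key := constant_of_has_deriv_right_zero hcont hderiv t
      (Set.mem_Icc.2 ⟨ht, le_refl t⟩)
    simp only [hA0, Real.exp_zero, one_smul] at key
    have : Real.exp (-(A t)) • (Real.exp (A t) • (θh t - θ)) =
        Real.exp (-(A t)) • (θh 0 - θ) := by rw [key]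
    rwa [smul_smul, ← Real.exp_add, neg_add_cancel, Real.exp_zero, one_smul] at this
  -- lower bound on A
  have hAbound : ∀ t : ℝ, 0 ≤ t → γ * ε ^ 2 * t ≤ A t := by
    intro t ht
    have hle : ∀ s ∈ Set.Icc (0:ℝ) t, γ * ε ^ 2 ≤ γ * Δ s ^ 2 := by
      intro s hs
      have h1 : ε ≤ Δ s := hΔall s hs.1
      have : ε ^ 2 ≤ Δ s ^ 2 := by nlinarith
      nlinarith
    have h2 : (∫ s in (0:ℝ)..t, γ * ε ^ 2) ≤ ∫ s in (0:ℝ)..t, γ * Δ s ^ 2 :=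
      intervalIntegral.integral_mono_on ht
        (intervalIntegrable_const)
        (hΔ2.intervalIntegrable 0 t) hle
    rw [intervalIntegral.integral_const] at h2
    simp only [smul_eq_mul, sub_zero] at h2
    nlinarith [h2]
  set c : ℝ := γ * ε ^ 2 with hc
  have hcpos : 0 < c := by positivity
  set tc : ℝ := max 1 ((-Real.log (1 - μ)) / c) with htc
  refine ⟨tc, lt_of_lt_of_le one_pos (le_max_left _ _), ?_⟩
  intro t ht
  have ht1 : (1:ℝ) < t := lt_of_le_of_lt (le_max_left _ _) ht
  have ht0 : (0:ℝ) ≤ t := by linarith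
  have hwt : w t < 1 - μ := by
    have h1 : (-Real.log (1 - μ)) / c < t := lt_of_le_of_lt (le_max_right _ _) ht
    have h2 : -Real.log (1 - μ) < c * t := by
      rwa [div_lt_iff₀ hcpos, mul_comm] at h1
    have h3 : w t = Real.exp (-(A t)) := hwval t ht0
    have h4 : Real.exp (-(A t)) ≤ Real.exp (-(c * t)) := by
      apply Real.exp_le_exp.2
      have := hAbound t ht0
      linarith
    have h5 : Real.exp (-(c * t)) < Real.exp (Real.log (1 - μ)) := by
      apply Real.exp_lt_exp.2; linarith
    rw [Real.exp_log (by linarith : (0:ℝ) < 1 - μ)] at h5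
    linarith [h3 ▸ lt_of_le_of_lt h4 h5]
  have hmin : min (w t) (1 - μ) = w t := min_eq_left hwt.le
  rw [hmin]
  have hwpos : 0 < w t := by
    rw [hwval t ht0]; exact Real.exp_pos _
  have hne : (1 - w t) ≠ 0 := by
    have : w t < 1 := by linarith
    linarith
  have hθt : θh t = θ + w t • (θh 0 - θ) := by
    have := hθval t ht0
    rw [← hwval t ht0] at this
    have h := this
    calc θh t = (θh t - θ) + θ := by abel
    _ = w t • (θh 0 - θ) + θ := by rw [h]
    _ = θ + w t • (θh 0 - θ) := by abel
  rw [hθt]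
  have hkey : θ + w t • (θh 0 - θ) - w t • θh 0 = (1 - w t) • θ := by
    rw [smul_sub, sub_smul, one_smul]; abel
  rw [hkey, smul_smul, inv_mul_cancel₀ hne, one_smul]
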